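/- Let G ∈ ℝ^{n×n}, P ∈ ℝ^{n×n} symmetric positive definite, and 0 < β ≤ α real numbers such that β·yᵀPy ≤ yᵀ(PG + GᵀP)y ≤ α·yᵀPy for all y ∈ ℝ^n. For x ≠ 0 let ‖x‖_d = e^{s_x} where s_x is the unique real with ‖exp(−s_x G)x‖_P = 1, and set ‖0‖_d = 0. Then for every x ∈ ℝ^n, min{‖x‖_d^{α/2}, ‖x‖_d^{β/2}} ≤ ‖x‖_P ≤ max{‖x‖_d^{α/2}, ‖x‖_d^{β/2}}. -/

import Mathlib

/-
Statement 5: sandwich inequality between the canonical homogeneous norm and the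
weighted Euclidean norm (inequality (4) of the paper).  Powers are real powers.
-/

open Matrix

/-- The weighted Euclidean norm ‖x‖_P = √(xᵀPx). -/
noncomputable def wnorm {ι : Type*} [Fintype ι] (P : Matrix ι ι ℝ) (x : ι → ℝ) : ℝ :=
  Real.sqrt (x ⬝ᵥ P.mulVec x)

section Aux

attribute [local instance] Matrix.linftyOpSemiNormedRing Matrix.linftyOpNormedRing
  Matrix.linftyOpNormedAlgebra

/-- Derivative of `t ↦ exp(tG) *ᵥ u`. -/
lemma aux_hasDerivAt_v (n : ℕ) (G : Matrix (Fin n) (Fin n) ℝ) (u : Fin n → ℝ) (t : ℝ) :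
    HasDerivAt (fun t : ℝ => (NormedSpace.exp (t • G)).mulVec u)
      ((G * NormedSpace.exp (t • G)).mulVec u) t := by
  let L : Matrix (Fin n) (Fin n) ℝ →L[ℝ] (Fin n → ℝ) :=
    LinearMap.toContinuousLinearMap
      { toFun := fun M => M.mulVec u
        map_add' := fun A B => Matrix.add_mulVec A B u
        map_smul' := fun c A => by simp [Matrix.smul_mulVec] }
  exact L.hasFDerivAt.comp_hasDerivAt t (hasDerivAt_exp_smul_const' G t)

/-- `exp(sG) * exp(-sG) = 1`. -/
lemma aux_exp_mul_exp_neg (n : ℕ) (G : Matrix (Fin n) (Fin n) ℝ) (s : ℝ) :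
    NormedSpace.exp (s • G) * NormedSpace.exp ((-s) • G) = 1 := by
  rw [← Matrix.exp_add_of_commute _ _
      (((Commute.refl G).smul_right (-s)).smul_left s)]
  rw [← add_smul]
  simp [NormedSpace.exp_zero]

end Aux

/-- Derivative of the quadratic form along a differentiable curve. -/
lemma aux_hasDerivAt_f (n : ℕ) (P : Matrix (Fin n) (Fin n) ℝ)
    (v : ℝ → (Fin n → ℝ)) (w : ℝ → (Fin n → ℝ)) (t : ℝ)
    (hv : HasDerivAt v (w t) t) :
    HasDerivAt (fun t => v t ⬝ᵥ P.mulVec (v t))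
      (w t ⬝ᵥ P.mulVec (v t) + v t ⬝ᵥ P.mulVec (w t)) t := by
  have hvi : ∀ i, HasDerivAt (fun t => v t i) (w t i) t := fun i => (hasDerivAt_pi.1 hv) i
  have h : HasDerivAt (fun t => ∑ i, v t i * ∑ j, P i j * v t j)
      (∑ i, (w t i * ∑ j, P i j * v t j + v t i * ∑ j, P i j * w t j)) t := by
    apply HasDerivAt.fun_sum
    intro i _
    exact (hvi i).mul (HasDerivAt.fun_sum (fun j _ => (hvi j).const_mul (P i j)))
  convert h using 2 <;>
    simp [dotProduct, Matrix.mulVec, Finset.sum_add_distrib]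

lemma aux_dot_transpose (n : ℕ) (G : Matrix (Fin n) (Fin n) ℝ) (a b : Fin n → ℝ) :
    a ⬝ᵥ (Gᵀ.mulVec b) = (G.mulVec a) ⬝ᵥ b := by
  rw [Matrix.dotProduct_mulVec, Matrix.vecMul_transpose]

theorem canonical_norm_sandwich
    (n : ℕ) (G P : Matrix (Fin n) (Fin n) ℝ)
    (hP : P.PosDef)
    (α β : ℝ) (hβ : 0 < β) (hβα : β ≤ α)
    (hsand : ∀ y : Fin n → ℝ,
      β * (y ⬝ᵥ P.mulVec y) ≤ y ⬝ᵥ (P * G + Gᵀ * P).mulVec y ∧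
      y ⬝ᵥ (P * G + Gᵀ * P).mulVec y ≤ α * (y ⬝ᵥ P.mulVec y))
    (dnorm : (Fin n → ℝ) → ℝ)
    (hd0 : dnorm 0 = 0)
    (hdpos : ∀ x : Fin n → ℝ, x ≠ 0 → 0 < dnorm x)
    (hdspec : ∀ x : Fin n → ℝ, x ≠ 0 →
      wnorm P ((NormedSpace.exp ((-Real.log (dnorm x)) • G)).mulVec x) = 1) :
    ∀ x : Fin n → ℝ,
      min (dnorm x ^ (α / 2)) (dnorm x ^ (β / 2)) ≤ wnorm P x ∧
      wnorm P x ≤ max (dnorm x ^ (α / 2)) (dnorm x ^ (β / 2)) := by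
  have hα : 0 < α := lt_of_lt_of_le hβ hβα
  intro x
  by_cases hx : x = 0
  · subst hx
    rw [hd0]
    rw [Real.zero_rpow (by positivity : α / 2 ≠ 0), Real.zero_rpow (by positivity : β / 2 ≠ 0)]
    simp [wnorm]
  -- main case
  set s : ℝ := Real.log (dnorm x) with hs_def
  set u : Fin n → ℝ := (NormedSpace.exp ((-s) • G)).mulVec x with hu_def
  have hu1 : wnorm P u = 1 := hdspec x hx
  have huPu : u ⬝ᵥ P.mulVec u = 1 := by
    have h0 : 0 ≤ u ⬝ᵥ P.mulVec u := by simpa using hP.posSemidef.dotProduct_mulVec_nonneg u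
    have := hu1
    rw [wnorm] at this
    nlinarith [Real.sq_sqrt h0, this]
  set v : ℝ → (Fin n → ℝ) := fun t => (NormedSpace.exp (t • G)).mulVec u with hv_def
  set f : ℝ → ℝ := fun t => v t ⬝ᵥ P.mulVec (v t) with hf_def
  have hvx : v s = x := by
    rw [hv_def]
    simp only [hu_def, Matrix.mulVec_mulVec]
    rw [aux_exp_mul_exp_neg, Matrix.one_mulVec]
  have hv0 : v 0 = u := by
    rw [hv_def]
    simp [NormedSpace.exp_zero, Matrix.one_mulVec]
  have hf0 : f 0 = 1 := by rw [hf_def]; simp only [hv0]; exact huPu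
  have hfs : f s = x ⬝ᵥ P.mulVec x := by rw [hf_def]; simp only [hvx]
  -- the derivative of f
  set q : ℝ → ℝ := fun t => v t ⬝ᵥ (P * G + Gᵀ * P).mulVec (v t) with hq_def
  have hfq : ∀ t, HasDerivAt f (q t) t := by
    intro t
    have hv' : HasDerivAt v (G.mulVec (v t)) t := by
      have := aux_hasDerivAt_v n G u t
      simpa [hv_def, ← Matrix.mulVec_mulVec] using this
    have h := aux_hasDerivAt_f n P v (fun t => G.mulVec (v t)) t hv'
    convert h using 1
    rw [hq_def]
    simp only [Matrix.add_mulVec, dotProduct_add, ← Matrix.mulVec_mulVec]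
    rw [aux_dot_transpose]
    ring_nf
  have hql : ∀ t, β * f t ≤ q t := fun t => (hsand (v t)).1
  have hqu : ∀ t, q t ≤ α * f t := fun t => (hsand (v t)).2
  -- Gronwall via monotone auxiliary functions
  set gA : ℝ → ℝ := fun t => Real.exp (-(α * t)) * f t with hgA_def
  set gB : ℝ → ℝ := fun t => Real.exp (-(β * t)) * f t with hgB_def
  have hgA' : ∀ t, HasDerivAt gA (Real.exp (-(α * t)) * (q t - α * f t)) t := by
    intro t
    have h1 : HasDerivAt (fun t : ℝ => -(α * t)) (-α) t := by
      simpa using ((hasDerivAt_id t).const_mul α).fun_neg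
    have h2 := h1.exp.fun_mul (hfq t)
    exact h2.congr_deriv (by ring)
  have hgB' : ∀ t, HasDerivAt gB (Real.exp (-(β * t)) * (q t - β * f t)) t := by
    intro t
    have h1 : HasDerivAt (fun t : ℝ => -(β * t)) (-β) t := by
      simpa using ((hasDerivAt_id t).const_mul β).fun_neg
    have h2 := h1.exp.fun_mul (hfq t)
    exact h2.congr_deriv (by ring)
  have hAanti : Antitone gA := by
    apply antitone_of_deriv_nonpos (fun t => (hgA' t).differentiableAt)
    intro t
    rw [(hgA' t).deriv]
    have := hqu t
    nlinarith [Real.exp_pos (-(α * t))]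
  have hBmono : Monotone gB := by
    apply monotone_of_deriv_nonneg (fun t => (hgB' t).differentiableAt)
    intro t
    rw [(hgB' t).deriv]
    have := hql t
    nlinarith [Real.exp_pos (-(β * t))]
  have hgA0 : gA 0 = 1 := by rw [hgA_def]; simp [hf0]
  have hgB0 : gB 0 = 1 := by rw [hgB_def]; simp [hf0]
  -- translate into bounds on f
  have keyA : ∀ t, 0 ≤ t → f t ≤ Real.exp (α * t) := by
    intro t ht
    have h := hAanti ht
    rw [hgA0] at h
    have e := (Real.exp_pos (-(α * t))).le
    calc f t = Real.exp (α * t) * (Real.exp (-(α * t)) * f t) := by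
          rw [← mul_assoc, ← Real.exp_add]; simp
      _ ≤ Real.exp (α * t) * 1 := by
          exact mul_le_mul_of_nonneg_left h (Real.exp_pos _).le
      _ = Real.exp (α * t) := mul_one _
  have keyA' : ∀ t, t ≤ 0 → Real.exp (α * t) ≤ f t := by
    intro t ht
    have h := hAanti ht
    rw [hgA0] at h
    calc Real.exp (α * t) = Real.exp (α * t) * 1 := (mul_one _).symm
      _ ≤ Real.exp (α * t) * (Real.exp (-(α * t)) * f t) :=
          mul_le_mul_of_nonneg_left h (Real.exp_pos _).le
      _ = f t := by rw [← mul_assoc, ← Real.exp_add]; simp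
  have keyB : ∀ t, 0 ≤ t → Real.exp (β * t) ≤ f t := by
    intro t ht
    have h := hBmono ht
    rw [hgB0] at h
    calc Real.exp (β * t) = Real.exp (β * t) * 1 := (mul_one _).symm
      _ ≤ Real.exp (β * t) * (Real.exp (-(β * t)) * f t) :=
          mul_le_mul_of_nonneg_left h (Real.exp_pos _).le
      _ = f t := by rw [← mul_assoc, ← Real.exp_add]; simp
  have keyB' : ∀ t, t ≤ 0 → f t ≤ Real.exp (β * t) := by
    intro t ht
    have h := hBmono ht
    rw [hgB0] at h
    calc f t = Real.exp (β * t) * (Real.exp (-(β * t)) * f t) := by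
          rw [← mul_assoc, ← Real.exp_add]; simp
      _ ≤ Real.exp (β * t) * 1 := mul_le_mul_of_nonneg_left h (Real.exp_pos _).le
      _ = Real.exp (β * t) := mul_one _
  -- rewrite powers of dnorm
  have hd : 0 < dnorm x := hdpos x hx
  have hpow : ∀ p : ℝ, dnorm x ^ p = Real.exp (s * p) := by
    intro p
    rw [Real.rpow_def_of_pos hd, hs_def]
  have hsqrt_exp : ∀ c : ℝ, Real.sqrt (Real.exp (c * s)) = Real.exp (s * (c / 2)) := by
    intro c
    rw [show Real.exp (c * s) = Real.exp (s * (c / 2)) ^ 2 by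
        rw [sq, ← Real.exp_add]; ring_nf]
    exact Real.sqrt_sq (Real.exp_pos _).le
  have hw : wnorm P x = Real.sqrt (f s) := by rw [wnorm, hfs]
  rcases le_total 0 s with hs | hs
  · -- s ≥ 0 : exp(βs) ≤ f s ≤ exp(αs)
    have h1 : Real.exp (β * s) ≤ f s := keyB s hs
    have h2 : f s ≤ Real.exp (α * s) := keyA s hs
    have hmm : Real.exp (s * (β / 2)) ≤ Real.exp (s * (α / 2)) :=
      Real.exp_le_exp.2 (by nlinarith)
    constructor
    · rw [hpow, hpow, min_eq_right hmm, hw]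
      rw [← hsqrt_exp β]
      exact Real.sqrt_le_sqrt h1
    · rw [hpow, hpow, max_eq_left hmm, hw]
      rw [← hsqrt_exp α]
      exact Real.sqrt_le_sqrt h2
  · -- s ≤ 0 : exp(αs) ≤ f s ≤ exp(βs)
    have h1 : Real.exp (α * s) ≤ f s := keyA' s hs
    have h2 : f s ≤ Real.exp (β * s) := keyB' s hs
    have hmm : Real.exp (s * (α / 2)) ≤ Real.exp (s * (β / 2)) :=
      Real.exp_le_exp.2 (by nlinarith)
    constructor
    · rw [hpow, hpow, min_eq_left hmm, hw]
      rw [← hsqrt_exp α]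
      exact Real.sqrt_le_sqrt h1
    · rw [hpow, hpow, max_eq_right hmm, hw]
      rw [← hsqrt_exp β]
      exact Real.sqrt_le_sqrt h2
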